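/- arXiv:1001.2911 — 3 statements merged into one kernel-verified Lean document; each statement's English description precedes it below -/
import Mathlib

section
/- For every α > 0, log Γ(α) = (α - 1/2)·log α - α + 1 + ∫_1^∞ φ(u)/u du - ∫_0^∞ φ(u)/(u+α) du, where φ(u) = u - ⌊u⌋ - 1/2 (Stirling-type formula for log Γ). -/
open Filter Topology Set MeasureTheory intervalIntegral

/-- The sawtooth function. -/
noncomputable def saw (t : ℝ) : ℝ := t - ⌊t⌋ - 1/2

lemma saw_measurable : Measurable saw :=
  (measurable_id.sub (measurable_from_top.comp Int.measurable_floor)).sub measurable_const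

lemma saw_abs_le (t : ℝ) : |saw t| ≤ 1/2 := by
  have h1 := Int.fract_nonneg t
  have h2 := Int.fract_lt_one t
  rw [Int.fract] at h1 h2
  unfold saw
  rw [abs_le]; constructor <;> linarith

lemma intervalIntegrable_of_bdd {f : ℝ → ℝ} (hm : Measurable f) {a b C : ℝ}
    (h : ∀ x ∈ Set.uIoc a b, |f x| ≤ C) : IntervalIntegrable f MeasureTheory.volume a b := by
  rw [intervalIntegrable_iff]
  haveI : IsFiniteMeasure (MeasureTheory.volume.restrict (Set.uIoc a b)) :=
    Real.isFiniteMeasure_restrict_Ioc _ _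
  refine ⟨hm.aestronglyMeasurable.restrict, ?_⟩
  refine MeasureTheory.HasFiniteIntegral.of_bounded (C := C) ?_
  rw [MeasureTheory.ae_restrict_iff' measurableSet_uIoc]
  exact MeasureTheory.ae_of_all _ fun x hx => by simpa [Real.norm_eq_abs] using h x hx

lemma saw_intervalIntegrable (a b : ℝ) : IntervalIntegrable saw MeasureTheory.volume a b :=
  intervalIntegrable_of_bdd saw_measurable (fun x _ => saw_abs_le x)

lemma ae_saw_eq {n : ℤ} {a b : ℝ} (ha : (n:ℝ) ≤ a) (hab : a ≤ b) (hb : b ≤ (n:ℝ) + 1) :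
    ∀ᵐ t ∂(MeasureTheory.volume : MeasureTheory.Measure ℝ),
      t ∈ Set.uIoc a b → saw t = t - n - 1/2 := by
  have hnull : (MeasureTheory.volume : MeasureTheory.Measure ℝ) {((n:ℝ)+1)} = 0 :=
    MeasureTheory.measure_singleton _
  filter_upwards [MeasureTheory.compl_mem_ae_iff.2 hnull] with t ht htm
  rw [Set.uIoc_of_le hab] at htm
  have h1 : (n:ℝ) < t := lt_of_le_of_lt ha htm.1
  have h2 : t < (n:ℝ) + 1 := lt_of_le_of_ne (htm.2.trans hb) (by simpa using ht)
  have : ⌊t⌋ = n := Int.floor_eq_iff.2 ⟨h1.le, h2⟩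
  simp [saw, this]

/-- Primitive of the sawtooth. -/
noncomputable def sawP (u : ℝ) : ℝ := ∫ t in (0:ℝ)..u, saw t

lemma sawP_continuous : Continuous sawP :=
  intervalIntegral.continuous_primitive (fun a b => saw_intervalIntegrable a b) 0

lemma saw_continuousWithinAt (u : ℝ) : ContinuousWithinAt saw (Set.Ici u) u := by
  have hmem : Set.Ico u ((⌊u⌋:ℝ)+1) ∈ nhdsWithin u (Set.Ici u) := by
    refine mem_nhdsWithin.2 ⟨Set.Iio ((⌊u⌋:ℝ)+1), isOpen_Iio, Int.lt_floor_add_one u, ?_⟩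
    intro x hx
    exact ⟨hx.2, hx.1⟩
  have heq : ∀ t ∈ Set.Ico u ((⌊u⌋:ℝ)+1), saw t = t - ⌊u⌋ - 1/2 := by
    intro t ht
    have : ⌊t⌋ = ⌊u⌋ := Int.floor_eq_iff.2 ⟨(Int.floor_le u).trans ht.1, ht.2⟩
    simp [saw, this]
  have hcont : ContinuousWithinAt (fun t => t - (⌊u⌋:ℝ) - 1/2) (Set.Ici u) u :=
    ((continuous_id.sub continuous_const).sub continuous_const).continuousWithinAt
  refine hcont.congr_of_eventuallyEq ?_ (by simp [saw])
  filter_upwards [hmem] with t ht using heq t ht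

lemma sawP_hasDerivWithinAt (u : ℝ) : HasDerivWithinAt sawP (saw u) (Set.Ici u) u := by
  have hmeas : StronglyMeasurableAtFilter saw (nhdsWithin u (Set.Ioi u)) :=
    ⟨Set.univ, univ_mem, saw_measurable.aestronglyMeasurable.restrict⟩
  exact intervalIntegral.integral_hasDerivWithinAt_right (saw_intervalIntegrable 0 u)
    hmeas ((saw_continuousWithinAt u).mono Set.Ioi_subset_Ici_self)

lemma sawP_nat (n : ℕ) : sawP n = 0 := by
  induction n with
  | zero => simp [sawP]
  | succ m ih =>
    have hsplit : sawP (m+1:ℕ) = sawP m + ∫ t in (m:ℝ)..((m:ℝ)+1), saw t := by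
      have hc : ((m+1:ℕ):ℝ) = (m:ℝ)+1 := by push_cast; ring
      rw [hc, sawP, sawP, ← intervalIntegral.integral_add_adjacent_intervals
        (saw_intervalIntegrable 0 m) (saw_intervalIntegrable m ((m:ℝ)+1))]
    have hcongr : (∫ t in (m:ℝ)..((m:ℝ)+1), saw t)
        = ∫ t in (m:ℝ)..((m:ℝ)+1), (t - (m:ℝ) - 1/2) := by
      refine intervalIntegral.integral_congr_ae ?_
      have := ae_saw_eq (n := (m:ℤ)) (a := (m:ℝ)) (b := (m:ℝ)+1) (by simp) (by linarith) (by simp)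
      filter_upwards [this] with t ht htm
      simpa using ht htm
    have hval : (∫ t in (m:ℝ)..((m:ℝ)+1), (t - (m:ℝ) - 1/2)) = 0 := by
      have : ∀ t ∈ Set.uIcc (m:ℝ) ((m:ℝ)+1), HasDerivAt (fun t => t^2/2 - ((m:ℝ)+1/2)*t)
          (t - (m:ℝ) - 1/2) t := by
        intro t _
        have h := ((hasDerivAt_pow 2 t).div_const 2).sub
          ((hasDerivAt_id t).const_mul ((m:ℝ)+1/2))
        refine h.congr_deriv ?_
        ring
      rw [intervalIntegral.integral_eq_sub_of_hasDerivAt this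
        (((continuous_id.sub continuous_const).sub continuous_const).continuousOn.intervalIntegrable)]
      ring
    rw [hsplit, hcongr, hval, ih]
    norm_num

lemma sawP_abs_le {u : ℝ} (hu : 0 ≤ u) : |sawP u| ≤ 1/2 := by
  have hfl : (0:ℝ) ≤ (⌊u⌋:ℝ) := by
    have : (0:ℤ) ≤ ⌊u⌋ := Int.le_floor.2 (by exact_mod_cast hu)
    exact_mod_cast this
  have hn : sawP ((⌊u⌋:ℝ)) = 0 := by
    have h0 : (0:ℤ) ≤ ⌊u⌋ := Int.le_floor.2 (by exact_mod_cast hu)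
    obtain ⟨m, hm⟩ := Int.eq_ofNat_of_zero_le h0
    rw [hm]
    exact_mod_cast sawP_nat m
  have hsplit : sawP u = sawP ((⌊u⌋:ℝ)) + ∫ t in ((⌊u⌋:ℝ))..u, saw t := by
    rw [sawP, sawP, ← intervalIntegral.integral_add_adjacent_intervals
      (saw_intervalIntegrable 0 _) (saw_intervalIntegrable _ u)]
  have hbd : |∫ t in ((⌊u⌋:ℝ))..u, saw t| ≤ (1/2) * |u - (⌊u⌋:ℝ)| := by
    have := intervalIntegral.norm_integral_le_of_norm_le_const
      (C := 1/2) (f := saw) (a := ((⌊u⌋:ℝ))) (b := u)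
      (fun x _ => by simpa [Real.norm_eq_abs] using saw_abs_le x)
    simpa [Real.norm_eq_abs] using this
  have hfr : |u - (⌊u⌋:ℝ)| ≤ 1 := by
    have h1 := Int.fract_nonneg u
    have h2 := Int.fract_lt_one u
    rw [Int.fract] at h1 h2
    rw [abs_le]; constructor <;> linarith
  rw [hsplit, hn, zero_add]
  calc |∫ t in ((⌊u⌋:ℝ))..u, saw t| ≤ (1/2) * |u - (⌊u⌋:ℝ)| := hbd
    _ ≤ 1/2 := by nlinarith [abs_nonneg (u - (⌊u⌋:ℝ))]

lemma sawdiv_intervalIntegrable {c a b : ℝ} (hac : 0 < a + c) (hab : a ≤ b) :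
    IntervalIntegrable (fun u => saw u / (u + c)) MeasureTheory.volume a b := by
  refine intervalIntegrable_of_bdd (f := fun u => saw u / (u + c)) (C := 1/(2*(a+c)))
    (saw_measurable.div ((measurable_id'.add measurable_const))) ?_
  intro x hx
  rw [Set.uIoc_of_le hab] at hx
  have hx0 : 0 < x + c := by linarith [hx.1]
  rw [abs_div, abs_of_pos hx0, div_le_iff₀ hx0]
  calc |saw x| ≤ 1/2 := saw_abs_le x
    _ = 1/(2*(a+c)) * (a+c) := by field_simp
    _ ≤ 1/(2*(a+c)) * (x + c) := by
        have h2c : 0 < 1/(2*(a+c)) := by positivity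
        nlinarith [hx.1]

/-- The key one-interval computation. -/
lemma saw_integral_piece {c : ℝ} (hc : 0 < c) (n : ℕ) :
    ∫ u in (n:ℝ)..((n:ℝ)+1), saw u / (u + c)
      = 1 - (c + n + 1/2) * (Real.log (c + n + 1) - Real.log (c + n)) := by
  have hcongr : (∫ u in (n:ℝ)..((n:ℝ)+1), saw u / (u + c))
      = ∫ u in (n:ℝ)..((n:ℝ)+1), (u - (n:ℝ) - 1/2) / (u + c) := by
    refine intervalIntegral.integral_congr_ae ?_
    have := ae_saw_eq (n := (n:ℤ)) (a := (n:ℝ)) (b := (n:ℝ)+1) (by simp) (by linarith) (by simp)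
    filter_upwards [this] with t ht htm
    rw [ht htm]
    norm_num
  rw [hcongr]
  have hderiv : ∀ u ∈ Set.uIcc (n:ℝ) ((n:ℝ)+1),
      HasDerivAt (fun u => u - (c + n + 1/2) * Real.log (u + c)) ((u - (n:ℝ) - 1/2)/(u + c)) u := by
    intro u hu
    rw [Set.uIcc_of_le (by linarith)] at hu
    have hu0 : 0 < u + c := by
      have : (0:ℝ) ≤ n := Nat.cast_nonneg n
      linarith [hu.1]
    have hlog : HasDerivAt (fun u : ℝ => Real.log (u + c)) (1/(u+c)) u := by
      have := (Real.hasDerivAt_log hu0.ne').comp u ((hasDerivAt_id u).add_const c)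
      simpa [one_div, Function.comp_def] using this
    have h := (hasDerivAt_id u).sub (hlog.const_mul (c + (n:ℝ) + 1/2))
    refine h.congr_deriv ?_
    field_simp
    ring
  have hint : IntervalIntegrable (fun u => (u - (n:ℝ) - 1/2)/(u + c))
      MeasureTheory.volume (n:ℝ) ((n:ℝ)+1) := by
    refine ContinuousOn.intervalIntegrable ?_
    refine ContinuousOn.div ((continuous_id.sub continuous_const).sub continuous_const).continuousOn
      (continuous_id.add continuous_const).continuousOn ?_
    intro u hu
    rw [Set.uIcc_of_le (by linarith)] at hu
    have h1 : (0:ℝ) ≤ (n:ℝ) := Nat.cast_nonneg n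
    have h2 := hu.1
    exact (by linarith : (0:ℝ) < u + c).ne'
  rw [intervalIntegral.integral_eq_sub_of_hasDerivAt hderiv hint]
  have e1 : (n:ℝ) + 1 + c = c + n + 1 := by ring
  have e2 : (n:ℝ) + c = c + n := by ring
  rw [e1, e2]
  ring

/-- Euler–Maclaurin first-order formula for `∑ log (c + j)`. -/
lemma saw_sum_formula {c : ℝ} (hc : 0 < c) (n : ℕ) :
    ∫ u in (0:ℝ)..(n:ℝ), saw u / (u + c)
      = (∑ j ∈ Finset.range (n+1), Real.log (c + j))
        - (Real.log c + Real.log (c + n))/2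
        - (((n:ℝ) + c) * Real.log ((n:ℝ) + c) - n - c * Real.log c) := by
  induction n with
  | zero => simp
  | succ m ih =>
    have hc0 : (0:ℝ) < c + m := by positivity
    have hc1 : (0:ℝ) < c + m + 1 := by positivity
    have hcast : ((m+1:ℕ):ℝ) = (m:ℝ)+1 := by push_cast; ring
    have hsplit : (∫ u in (0:ℝ)..((m:ℝ)+1), saw u / (u + c))
        = (∫ u in (0:ℝ)..(m:ℝ), saw u / (u + c)) + ∫ u in (m:ℝ)..((m:ℝ)+1), saw u / (u + c) :=
      (intervalIntegral.integral_add_adjacent_intervals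
        (sawdiv_intervalIntegrable (by linarith) (Nat.cast_nonneg m))
        (sawdiv_intervalIntegrable (by positivity) (by linarith))).symm
    rw [hcast, hsplit, ih, saw_integral_piece hc m, Finset.sum_range_succ _ (m+1)]
    have e3 : (c + ((m+1:ℕ):ℝ)) = c + m + 1 := by push_cast; ring
    have e4 : ((m:ℝ) + 1 + c) = c + m + 1 := by ring
    have e5 : ((m:ℝ) + c) = c + m := by ring
    have e6 : (c + ((m:ℝ) + 1)) = c + m + 1 := by ring
    rw [e3, e4, e5, e6]
    ring

lemma sawP_div_sq_contOn {c a b : ℝ} (hac : 0 < a + c) :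
    ContinuousOn (fun u => sawP u / (u + c)^2) (Set.Icc a b) := by
  refine ContinuousOn.div sawP_continuous.continuousOn
    (((continuous_id.add continuous_const).pow 2).continuousOn) ?_
  intro x hx
  have : 0 < x + c := by linarith [hx.1]
  positivity

lemma saw_tendsto_integral {a c : ℝ} (ha : 0 ≤ a) (hac : 0 < a + c) :
    ∃ L, Tendsto (fun T : ℝ => ∫ u in a..T, saw u / (u + c)) atTop (𝓝 L) := by
  have hIoi : MeasureTheory.IntegrableOn (fun u => sawP u / (u + c)^2)
      (Set.Ioi a) MeasureTheory.volume := by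
    have hmaj : MeasureTheory.IntegrableOn (fun u : ℝ => ((u + c)^2)⁻¹)
        (Set.Ioi a) MeasureTheory.volume := by
      refine MeasureTheory.integrableOn_Ioi_deriv_of_nonneg
        (g := fun u : ℝ => -(u + c)⁻¹) (l := 0) ?_ ?_ ?_ ?_
      · have hcw : ContinuousWithinAt (fun u : ℝ => u + c) (Set.Ici a) a :=
          (continuous_id.add continuous_const).continuousWithinAt
        exact (hcw.inv₀ hac.ne').neg
      · intro x hx
        have hx0 : 0 < x + c := by
          have := Set.mem_Ioi.1 hx; linarith
        have h := (((hasDerivAt_id x).add_const c).inv hx0.ne').neg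
        refine h.congr_deriv ?_
        field_simp
        simp [id, hx0.ne']
      · intro x hx
        have hx0 : 0 < x + c := by
          have := Set.mem_Ioi.1 hx; linarith
        positivity
      · have h1 : Tendsto (fun u : ℝ => (u + c)⁻¹) atTop (𝓝 0) :=
          tendsto_inv_atTop_zero.comp (tendsto_atTop_add_const_right atTop c tendsto_id)
        simpa using h1.neg
    refine MeasureTheory.Integrable.mono' hmaj ?_ ?_
    · exact ((sawP_continuous.measurable.div
        (((continuous_id.add continuous_const).pow 2).measurable))).aestronglyMeasurable.restrict
    · rw [MeasureTheory.ae_restrict_iff' measurableSet_Ioi]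
      refine MeasureTheory.ae_of_all _ fun x hx => ?_
      have hx' : a < x := Set.mem_Ioi.1 hx
      have hx0 : 0 < x + c := by linarith
      rw [Real.norm_eq_abs, abs_div, abs_of_pos (by positivity : (0:ℝ) < (x+c)^2), div_le_iff₀ (by positivity : (0:ℝ) < (x+c)^2)]
      calc |sawP x| ≤ 1/2 := sawP_abs_le (by linarith)
        _ ≤ 1 := by norm_num
        _ = ((x+c)^2)⁻¹ * (x+c)^2 := by field_simp
  have key : ∀ T, a ≤ T → (∫ u in a..T, saw u / (u + c))
      = sawP T/(T+c) - sawP a/(a+c) + ∫ u in a..T, sawP u/(u+c)^2 := by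
    intro T hT
    have hcont : ContinuousOn (fun u => sawP u / (u + c)) (Set.Icc a T) := by
      refine ContinuousOn.div sawP_continuous.continuousOn
        ((continuous_id.add continuous_const).continuousOn) ?_
      intro x hx
      have : 0 < x + c := by linarith [hx.1]
      exact this.ne'
    have hderiv : ∀ x ∈ Set.Ioo a T, HasDerivWithinAt (fun u => sawP u / (u + c))
        (saw x / (x + c) - sawP x / (x + c)^2) (Set.Ioi x) x := by
      intro x hx
      have hx0 : 0 < x + c := by linarith [hx.1]
      have h1 : HasDerivWithinAt sawP (saw x) (Set.Ioi x) x :=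
        (sawP_hasDerivWithinAt x).mono Set.Ioi_subset_Ici_self
      have h2 : HasDerivWithinAt (fun u : ℝ => u + c) 1 (Set.Ioi x) x :=
        (((hasDerivAt_id x).add_const c)).hasDerivWithinAt
      have h := h1.div h2 hx0.ne'
      refine h.congr_deriv ?_
      field_simp
    have hint2 : IntervalIntegrable (fun u => sawP u/(u+c)^2) MeasureTheory.volume a T :=
      ((sawP_div_sq_contOn hac).mono (by rw [Set.uIcc_of_le hT])).intervalIntegrable
    have hint1 : IntervalIntegrable (fun u => saw u/(u+c)) MeasureTheory.volume a T :=
      sawdiv_intervalIntegrable hac hT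
    have hftc := intervalIntegral.integral_eq_sub_of_hasDeriv_right_of_le hT hcont hderiv
      (hint1.sub hint2)
    rw [intervalIntegral.integral_sub hint1 hint2] at hftc
    have : (∫ u in a..T, saw u / (u + c))
        = (sawP T/(T+c) - sawP a/(a+c)) + ∫ u in a..T, sawP u/(u+c)^2 := by
      rw [← hftc]; ring
    simpa using this
  refine ⟨-(sawP a/(a+c)) + ∫ u in Set.Ioi a, sawP u/(u+c)^2, ?_⟩
  have h1 : Tendsto (fun T : ℝ => sawP T/(T+c)) atTop (𝓝 0) := by
    refine squeeze_zero_norm' (a := fun T : ℝ => (1/2) * (T+c)⁻¹) ?_ ?_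
    · filter_upwards [eventually_ge_atTop (max a 1)] with T hT
      have hT1 : (1:ℝ) ≤ T := le_trans (le_max_right a 1) hT
      have hTa : a ≤ T := le_trans (le_max_left a 1) hT
      have hT0 : 0 < T + c := by linarith
      rw [Real.norm_eq_abs, abs_div, abs_of_pos hT0]
      rw [div_le_iff₀ hT0]
      calc |sawP T| ≤ 1/2 := sawP_abs_le (by linarith)
        _ ≤ (1/2) * ((T+c)⁻¹ * (T+c)) := by
            rw [inv_mul_cancel₀ hT0.ne']; norm_num
        _ = (1/2) * (T+c)⁻¹ * (T+c) := by ring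
    · have h2 : Tendsto (fun T : ℝ => (T + c)⁻¹) atTop (𝓝 0) :=
        tendsto_inv_atTop_zero.comp (tendsto_atTop_add_const_right atTop c tendsto_id)
      have := h2.const_mul (1/2 : ℝ)
      simpa using this
  have h3 : Tendsto (fun T : ℝ => ∫ u in a..T, sawP u/(u+c)^2) atTop
      (𝓝 (∫ u in Set.Ioi a, sawP u/(u+c)^2)) :=
    MeasureTheory.intervalIntegral_tendsto_integral_Ioi a hIoi tendsto_id
  have hsum : Tendsto (fun T : ℝ => sawP T/(T+c) - sawP a/(a+c) + ∫ u in a..T, sawP u/(u+c)^2)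
      atTop (𝓝 (0 - sawP a/(a+c) + ∫ u in Set.Ioi a, sawP u/(u+c)^2)) :=
    ((h1.sub_const _).add h3)
  have heq : (fun T : ℝ => sawP T/(T+c) - sawP a/(a+c) + ∫ u in a..T, sawP u/(u+c)^2)
      =ᶠ[atTop] (fun T : ℝ => ∫ u in a..T, saw u / (u + c)) := by
    filter_upwards [eventually_ge_atTop a] with T hT using (key T hT).symm
  have := Tendsto.congr' heq hsum
  simpa using this

lemma saw_add_one (t : ℝ) : saw (t + 1) = saw t := by
  unfold saw
  rw [Int.floor_add_one]
  push_cast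
  ring

lemma log_factorial (n : ℕ) :
    Real.log ((n.factorial : ℕ) : ℝ) = ∑ j ∈ Finset.range n, Real.log (1 + (j:ℝ)) := by
  induction n with
  | zero => simp
  | succ m ih =>
    have h1 : (((m+1).factorial : ℕ) : ℝ) = ((m+1:ℕ):ℝ) * ((m.factorial : ℕ) : ℝ) := by
      rw [Nat.factorial_succ]; push_cast; ring
    have h2 : ((m+1:ℕ):ℝ) ≠ 0 := by positivity
    have h3 : ((m.factorial : ℕ) : ℝ) ≠ 0 := by
      exact_mod_cast m.factorial_pos.ne'
    rw [h1, Real.log_mul h2 h3, ih, Finset.sum_range_succ, add_comm]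
    congr 2
    push_cast
    ring

lemma shift_integral (m : ℕ) :
    (∫ u in (0:ℝ)..(m:ℝ), saw u / (u + 1)) = ∫ u in (1:ℝ)..((m:ℝ)+1), saw u / u := by
  have h1 : (∫ u in (0:ℝ)..(m:ℝ), saw u / (u + 1))
      = ∫ u in (0:ℝ)..(m:ℝ), (fun x => saw x / x) (u + 1) := by
    refine intervalIntegral.integral_congr fun x _ => ?_
    simp only
    rw [saw_add_one]
  rw [h1, intervalIntegral.integral_comp_add_right (fun x => saw x / x) 1, zero_add]

lemma hseq_aux (α : ℝ) (hα : 0 < α) (m : ℕ) :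
    Real.log (Real.GammaSeq α (m+1))
      = (∫ u in (1:ℝ)..((m:ℝ)+1), saw u / u) - (∫ u in (0:ℝ)..((m:ℝ)+1), saw u / (u+α))
        + (1 + α * Real.log α - Real.log α / 2)
        - (((m:ℝ)+1+α+1/2) * (Real.log ((m:ℝ)+1+α) - Real.log ((m:ℝ)+1))) := by
  have hcast : ((m+1:ℕ):ℝ) = (m:ℝ)+1 := by push_cast; ring
  have hNpos : (0:ℝ) < ((m+1:ℕ):ℝ) := by positivity
  have hprodpos : (0:ℝ) < ∏ j ∈ Finset.range (m+1+1), (α + (j:ℝ)) :=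
    Finset.prod_pos fun j _ => by positivity
  have hfacpos : (0:ℝ) < (((m+1).factorial : ℕ) : ℝ) := by exact_mod_cast (m+1).factorial_pos
  have hlogGS : Real.log (Real.GammaSeq α (m+1))
      = α * Real.log ((m:ℝ)+1) + Real.log ((((m+1).factorial:ℕ)) : ℝ)
        - ∑ j ∈ Finset.range (m+1+1), Real.log (α + (j:ℝ)) := by
    rw [Real.GammaSeq]
    rw [Real.log_div (by positivity) hprodpos.ne']
    rw [Real.log_mul (by positivity) hfacpos.ne']
    rw [Real.log_rpow hNpos]
    rw [Real.log_prod (fun j _ => by positivity)]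
    rw [hcast]
  have hfact := log_factorial (m+1)
  have hsum1 := saw_sum_formula hα (m+1)
  have hsum2 := saw_sum_formula one_pos m
  rw [hcast] at hsum1
  rw [shift_integral m] at hsum2
  rw [hlogGS, hfact]
  rw [Real.log_one] at hsum2
  have e1 : α + ((m:ℝ)+1) = (m:ℝ)+1+α := by ring
  have e2 : ((m:ℝ)+1) + α = (m:ℝ)+1+α := by ring
  have e3 : (1:ℝ) + (m:ℝ) = (m:ℝ)+1 := by ring
  rw [e1, e2] at hsum1
  rw [e3] at hsum2
  linarith [hsum1, hsum2]

lemma remainder_tendsto (α : ℝ) (hα : 0 < α) :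
    Tendsto (fun x : ℝ => (x + α + 1/2) * (Real.log (x + α) - Real.log x)) atTop (𝓝 α) := by
  have t1 : Tendsto (fun x : ℝ => x * Real.log (1 + α / x)) atTop (𝓝 α) :=
    Real.tendsto_mul_log_one_add_div_atTop α
  have t0 : Tendsto (fun x : ℝ => 1 + α / x) atTop (𝓝 1) := by
    have : Tendsto (fun x : ℝ => α / x) atTop (𝓝 0) :=
      tendsto_const_nhds.div_atTop tendsto_id
    simpa using (tendsto_const_nhds (x := (1:ℝ))).add this
  have t2 : Tendsto (fun x : ℝ => Real.log (1 + α / x)) atTop (𝓝 0) := by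
    have := (Real.continuousAt_log one_ne_zero).tendsto.comp t0
    simpa [Function.comp_def] using this
  have t3 : Tendsto (fun x : ℝ => x * Real.log (1 + α / x)
      + (α + 1/2) * Real.log (1 + α / x)) atTop (𝓝 (α + (α + 1/2) * 0)) :=
    t1.add (t2.const_mul _)
  have heq : (fun x : ℝ => x * Real.log (1 + α / x) + (α + 1/2) * Real.log (1 + α / x))
      =ᶠ[atTop] (fun x : ℝ => (x + α + 1/2) * (Real.log (x + α) - Real.log x)) := by
    filter_upwards [eventually_gt_atTop (0:ℝ)] with x hx
    have h1 : (1:ℝ) + α / x = (x + α) / x := by field_simp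
    rw [h1, Real.log_div (by positivity) hx.ne']
    ring
  have := Tendsto.congr' heq t3
  simpa using this

theorem log_gamma_stirling (α : ℝ) (hα : 0 < α) :
    ∃ I J : ℝ,
      Tendsto (fun T : ℝ => ∫ u in (1 : ℝ)..T, (u - ⌊u⌋ - 1 / 2) / u) atTop (𝓝 I) ∧
      Tendsto (fun T : ℝ => ∫ u in (0 : ℝ)..T, (u - ⌊u⌋ - 1 / 2) / (u + α)) atTop (𝓝 J) ∧
      Real.log (Real.Gamma α) = (α - 1 / 2) * Real.log α - α + 1 + I - J := by
  obtain ⟨I, hI0⟩ := saw_tendsto_integral (a := 1) (c := 0) zero_le_one (by norm_num)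
  obtain ⟨J, hJ0⟩ := saw_tendsto_integral (a := 0) (c := α) le_rfl (by simpa using hα)
  have hIeq : (fun T : ℝ => ∫ u in (1:ℝ)..T, saw u / (u + 0))
      = (fun T : ℝ => ∫ u in (1:ℝ)..T, saw u / u) := by
    funext T
    exact intervalIntegral.integral_congr fun x _ => by rw [add_zero]
  rw [hIeq] at hI0
  refine ⟨I, J, hI0, hJ0, ?_⟩
  have hGpos : 0 < Real.Gamma α := Real.Gamma_pos_of_pos hα
  have hlog : Tendsto (fun n : ℕ => Real.log (Real.GammaSeq α n)) atTop
      (𝓝 (Real.log (Real.Gamma α))) :=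
    ((Real.continuousAt_log hGpos.ne').tendsto).comp (Real.GammaSeq_tendsto_Gamma α)
  have hlog' : Tendsto (fun m : ℕ => Real.log (Real.GammaSeq α (m+1))) atTop
      (𝓝 (Real.log (Real.Gamma α))) := hlog.comp (tendsto_add_atTop_nat 1)
  have hNcast : Tendsto (fun m : ℕ => (m:ℝ)+1) atTop atTop :=
    tendsto_atTop_add_const_right _ 1 tendsto_natCast_atTop_atTop
  have hA : Tendsto (fun m : ℕ => ∫ u in (1:ℝ)..((m:ℝ)+1), saw u / u) atTop (𝓝 I) :=
    hI0.comp hNcast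
  have hB : Tendsto (fun m : ℕ => ∫ u in (0:ℝ)..((m:ℝ)+1), saw u / (u+α)) atTop (𝓝 J) :=
    hJ0.comp hNcast
  have hR : Tendsto (fun m : ℕ => ((m:ℝ)+1+α+1/2) * (Real.log ((m:ℝ)+1+α) - Real.log ((m:ℝ)+1)))
      atTop (𝓝 α) := by
    have := (remainder_tendsto α hα).comp hNcast
    simpa [Function.comp_def] using this
  have hcomb : Tendsto (fun m : ℕ => Real.log (Real.GammaSeq α (m+1))) atTop
      (𝓝 (I - J + (1 + α * Real.log α - Real.log α / 2) - α)) := by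
    have h := ((hA.sub hB).add (tendsto_const_nhds
      (x := (1 + α * Real.log α - Real.log α / 2)))).sub hR
    exact h.congr fun m => (hseq_aux α hα m).symm
  have hfin := tendsto_nhds_unique hlog' hcomb
  rw [hfin]
  ring
end

section
/- For every real α with 0 < α < 1, ζ'(0, α) + ζ'(0, 1-α) = -log(2·sin(πα)), where ζ'(0, α) denotes the s-derivative of the Hurwitz zeta function at s = 0. -/
open Complex HurwitzZeta
open Filter Topology Finset

lemma cpow_diff_bound (s : ℂ) (hs : 0 < s.re) (n : ℕ) :
    ‖((n+1 : ℕ) : ℂ) ^ (-s) - ((n+2 : ℕ) : ℂ) ^ (-s)‖ ≤ ‖s‖ * ((n+1 : ℕ) : ℝ) ^ (-s.re - 1) := by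
  set f : ℝ → ℂ := fun t => (t : ℂ) ^ (-s) with hf
  set C : ℝ := ‖s‖ * ((n+1 : ℕ) : ℝ) ^ (-s.re - 1) with hC
  have hd : ∀ t ∈ Set.Icc ((n+1:ℕ):ℝ) ((n+2:ℕ):ℝ),
      HasDerivWithinAt f (-s * (t:ℂ) ^ (-s - 1)) (Set.Icc ((n+1:ℕ):ℝ) ((n+2:ℕ):ℝ)) t := by
    intro t ht
    have ht0 : (0:ℝ) < t := lt_of_lt_of_le (by positivity) ht.1
    have h1 : HasDerivAt (fun w : ℂ => w ^ (-s)) (-s * (t:ℂ) ^ (-s - 1)) (t:ℂ) := by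
      have := HasDerivAt.cpow_const (f := fun w : ℂ => w) (f' := 1) (c := -s)
        (hasDerivAt_id (t:ℂ)) (by exact Or.inl (by exact_mod_cast ht0))
      simpa using this
    exact (h1.comp_ofReal).hasDerivWithinAt
  have hb : ∀ t ∈ Set.Ico ((n+1:ℕ):ℝ) ((n+2:ℕ):ℝ), ‖-s * (t:ℂ) ^ (-s - 1)‖ ≤ C := by
    intro t ht
    have ht1 : ((n+1:ℕ):ℝ) ≤ t := ht.1
    have ht0 : (0:ℝ) < t := lt_of_lt_of_le (by positivity) ht1
    rw [norm_mul, norm_neg]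
    have h2 : ‖(t:ℂ) ^ (-s - 1)‖ = t ^ (-s.re - 1) := by
      rw [Complex.norm_cpow_eq_rpow_re_of_pos ht0]
      norm_num
    rw [h2, hC]
    refine mul_le_mul_of_nonneg_left ?_ (norm_nonneg s)
    exact Real.rpow_le_rpow_of_nonpos (by positivity) ht1 (by linarith)
  have key := norm_image_sub_le_of_norm_deriv_le_segment' hd hb ((n+2:ℕ):ℝ)
    (by constructor <;> push_cast <;> norm_num)
  calc ‖((n+1 : ℕ) : ℂ) ^ (-s) - ((n+2 : ℕ) : ℂ) ^ (-s)‖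
      = ‖f ((n+2:ℕ):ℝ) - f ((n+1:ℕ):ℝ)‖ := by rw [norm_sub_rev]; simp [hf]
    _ ≤ C * (((n+2:ℕ):ℝ) - ((n+1:ℕ):ℝ)) := key
    _ = C := by push_cast; ring_nf

section
variable {a : ℝ}

lemma z_norm (a : ℝ) : ‖Complex.exp (2 * Real.pi * I * a)‖ = 1 := by
  rw [Complex.norm_exp]
  have : (2 * (Real.pi:ℂ) * I * a).re = 0 := by simp
  rw [this, Real.exp_zero]

lemma z_ne_one (h0 : 0 < a) (h1 : a < 1) : Complex.exp (2 * Real.pi * I * a) ≠ 1 := by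
  rw [Ne, Complex.exp_eq_one_iff]
  rintro ⟨n, hn⟩
  have hne : ((2 * Real.pi * I : ℂ)) ≠ 0 := by
    simp [Real.pi_ne_zero, Complex.I_ne_zero, Complex.ofReal_ne_zero]
  have ha : (a : ℂ) = (n : ℂ) := by
    apply mul_left_cancel₀ hne
    rw [show (2 * (Real.pi:ℂ) * I) * a = 2 * Real.pi * I * a by ring, hn]; ring
  have ha' : a = (n : ℝ) := by exact_mod_cast ha
  rcases lt_or_ge n 1 with h | h
  · have : (n:ℝ) ≤ 0 := by exact_mod_cast Int.lt_add_one_iff.mp (by exact_mod_cast h)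
    linarith
  · have : (1:ℝ) ≤ (n:ℝ) := by exact_mod_cast h
    linarith

lemma one_sub_z_re (h0 : 0 < a) (h1 : a < 1) :
    0 < (1 - Complex.exp (2 * Real.pi * I * a)).re := by
  have hre : (Complex.exp (2 * Real.pi * I * a)).re = Real.cos (2 * Real.pi * a) := by
    rw [show (2 * (Real.pi:ℂ) * I * a) = ((2 * Real.pi * a : ℝ) : ℂ) * I by push_cast; ring]
    rw [Complex.exp_ofReal_mul_I_re]
  have hcos : Real.cos (2 * Real.pi * a) < 1 := by
    rcases lt_or_eq_of_le (Real.cos_le_one (2 * Real.pi * a)) with h | h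
    · exact h
    · exfalso
      have h2 := (Real.cos_eq_one_iff_of_lt_of_lt (by nlinarith [Real.pi_pos]) (by nlinarith [Real.pi_pos])).mp h
      nlinarith [Real.pi_pos]
  simp [hre]; linarith

end

noncomputable def Efun (z : ℂ) (N : ℕ) : ℂ := ∑ n ∈ Finset.range N, z ^ (n + 1)

noncomputable def gterm (z : ℂ) (s : ℂ) (N : ℕ) : ℂ :=
  Efun z (N + 1) * (((N + 1 : ℕ) : ℂ) ^ (-s) - ((N + 2 : ℕ) : ℂ) ^ (-s))

noncomputable def gfun (z : ℂ) (s : ℂ) : ℂ := ∑' N : ℕ, gterm z s N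

lemma Efun_succ (z : ℂ) (N : ℕ) : Efun z (N + 1) = Efun z N + z ^ (N + 1) := by
  simp [Efun, Finset.sum_range_succ]

lemma Efun_bound {z : ℂ} (hz : ‖z‖ = 1) (hz1 : z ≠ 1) (N : ℕ) :
    ‖Efun z N‖ ≤ 2 / ‖1 - z‖ := by
  have h1z : (1 : ℂ) - z ≠ 0 := sub_ne_zero.mpr (Ne.symm hz1)
  have : Efun z N = z * ((z ^ N - 1) / (z - 1)) := by
    rw [Efun, ← geom_sum_eq hz1]
    rw [Finset.mul_sum]
    exact Finset.sum_congr rfl fun i _ => by ring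
  rw [this, norm_mul, hz, one_mul, norm_div]
  rw [show z - 1 = -(1 - z) by ring, norm_neg]
  gcongr
  calc ‖z ^ N - 1‖ ≤ ‖z ^ N‖ + ‖(1:ℂ)‖ := norm_sub_le _ _
    _ = 2 := by rw [norm_pow, hz]; norm_num

lemma abel_identity (z s : ℂ) (M : ℕ) :
    ∑ N ∈ Finset.range M, gterm z s N =
      (∑ n ∈ Finset.range M, z ^ (n + 1) * ((n + 1 : ℕ) : ℂ) ^ (-s)) -
        Efun z M * ((M + 1 : ℕ) : ℂ) ^ (-s) := by
  induction M with
  | zero => simp [Efun]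
  | succ M ih =>
    rw [Finset.sum_range_succ, ih, Finset.sum_range_succ, gterm, Efun_succ]
    push_cast
    rw [show ((M:ℂ) + 2) = (M:ℂ) + 1 + 1 by ring]
    ring

open Finset

lemma summable_aux {c : ℝ} (hc : 0 < c) :
    Summable (fun N : ℕ => ((N + 1 : ℕ) : ℝ) ^ (-c - 1)) := by
  have h : Summable (fun N : ℕ => 1 / (N : ℝ) ^ (c + 1)) :=
    Real.summable_one_div_nat_rpow.mpr (by linarith)
  have := (summable_nat_add_iff 1).mpr h
  refine this.congr fun N => ?_
  rw [one_div, ← Real.rpow_neg (by positivity)]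
  push_cast
  ring_nf

lemma norm_natCast_cpow_neg (k : ℕ) (hk : 0 < k) (s : ℂ) :
    ‖((k : ℕ) : ℂ) ^ (-s)‖ = (k : ℝ) ^ (-s.re) := by
  rw [show ((k:ℕ):ℂ) = (((k:ℝ)):ℂ) by push_cast; rfl,
    Complex.norm_cpow_eq_rpow_re_of_pos (by exact_mod_cast hk)]
  simp

lemma gterm_bound {z : ℂ} (hz : ‖z‖ = 1) (hz1 : z ≠ 1) {s : ℂ} (hs : 0 < s.re) (N : ℕ) :
    ‖gterm z s N‖ ≤ (2 / ‖1 - z‖) * ‖s‖ * ((N + 1 : ℕ) : ℝ) ^ (-s.re - 1) := by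
  rw [gterm, norm_mul, mul_assoc]
  exact mul_le_mul (Efun_bound hz hz1 (N+1)) (cpow_diff_bound s hs N) (norm_nonneg _)
    (by positivity)

lemma summable_gterm {z : ℂ} (hz : ‖z‖ = 1) (hz1 : z ≠ 1) {s : ℂ} (hs : 0 < s.re) :
    Summable (gterm z s) := by
  apply Summable.of_norm
  apply Summable.of_nonneg_of_le (fun N => norm_nonneg _) (gterm_bound hz hz1 hs)
  exact ((summable_aux hs).mul_left _)

lemma tail_zero {z : ℂ} (hz : ‖z‖ = 1) (hz1 : z ≠ 1) {s : ℂ} (hs : 0 < s.re) :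
    Tendsto (fun M : ℕ => Efun z M * ((M + 1 : ℕ) : ℂ) ^ (-s)) atTop (𝓝 0) := by
  apply squeeze_zero_norm (a := fun M : ℕ => (2 / ‖1 - z‖) * ((M + 1 : ℝ)) ^ (-s.re))
  · intro M
    rw [norm_mul]
    have h1 := Efun_bound hz hz1 M
    have h2 : ‖((M + 1 : ℕ) : ℂ) ^ (-s)‖ = ((M + 1 : ℕ) : ℝ) ^ (-s.re) :=
      norm_natCast_cpow_neg (M+1) (Nat.succ_pos M) s
    rw [h2]
    push_cast
    exact mul_le_mul_of_nonneg_right h1 (by positivity)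
  · rw [show (0:ℝ) = (2 / ‖1 - z‖) * 0 by ring]
    exact Tendsto.const_mul _ ((tendsto_rpow_neg_atTop hs).comp
      (tendsto_atTop_add_const_right atTop (1:ℝ) tendsto_natCast_atTop_atTop))

lemma partial_tendsto {z : ℂ} (hz : ‖z‖ = 1) (hz1 : z ≠ 1) {s : ℂ} (hs : 0 < s.re) :
    Tendsto (fun M : ℕ => ∑ n ∈ Finset.range M, z ^ (n + 1) * ((n + 1 : ℕ) : ℂ) ^ (-s))
      atTop (𝓝 (gfun z s)) := by
  have h1 := ((summable_gterm hz hz1 hs).hasSum).tendsto_sum_nat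
  have h2 := tail_zero hz hz1 hs
  have := h1.add h2
  rw [add_zero] at this
  refine this.congr fun M => ?_
  rw [abel_identity]
  ring

lemma gfun_differentiableAt {z : ℂ} (hz : ‖z‖ = 1) (hz1 : z ≠ 1) {s₀ : ℂ} (hs₀ : 0 < s₀.re) :
    DifferentiableAt ℂ (gfun z) s₀ := by
  set U : Set ℂ := {s | s₀.re / 2 < s.re ∧ ‖s‖ < ‖s₀‖ + 1} with hU
  have hUopen : IsOpen U := by
    apply IsOpen.inter
    · exact isOpen_lt continuous_const Complex.continuous_re
    · exact isOpen_lt continuous_norm continuous_const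
  have hs₀U : s₀ ∈ U := ⟨by simpa using by linarith, by simp⟩
  have hdiff : DifferentiableOn ℂ (gfun z) U := by
    apply differentiableOn_tsum_of_summable_norm
      (u := fun N : ℕ => (2 / ‖1 - z‖) * (‖s₀‖ + 1) * ((N + 1 : ℕ) : ℝ) ^ (-(s₀.re / 2) - 1))
    · exact Summable.mul_left _ (summable_aux (by linarith))
    · intro N
      apply DifferentiableOn.const_mul
      apply DifferentiableOn.sub
      · exact (Differentiable.differentiableOn (fun s => by
          exact ((differentiable_neg s).const_cpow (Or.inl (by exact_mod_cast Nat.succ_ne_zero N)))))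
      · exact (Differentiable.differentiableOn (fun s => by
          exact ((differentiable_neg s).const_cpow (Or.inl (by
            exact_mod_cast Nat.succ_ne_zero (N+1))))))
    · exact hUopen
    · intro N w hw
      have hw1 : 0 < w.re := lt_trans (by linarith) hw.1
      calc ‖gterm z w N‖ ≤ (2 / ‖1 - z‖) * ‖w‖ * ((N + 1 : ℕ) : ℝ) ^ (-w.re - 1) :=
            gterm_bound hz hz1 hw1 N
        _ ≤ (2 / ‖1 - z‖) * (‖s₀‖ + 1) * ((N + 1 : ℕ) : ℝ) ^ (-(s₀.re / 2) - 1) := by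
            apply mul_le_mul
            · exact mul_le_mul_of_nonneg_left (le_of_lt hw.2) (by positivity)
            · apply Real.rpow_le_rpow_of_exponent_le (by exact_mod_cast Nat.one_le_iff_ne_zero.mpr (Nat.succ_ne_zero N))
              have := hw.1
              linarith
            · positivity
            · positivity
  exact (hdiff.differentiableAt (hUopen.mem_nhds hs₀U))

lemma coe_ne_zero_unitAddCircle {a : ℝ} (h0 : 0 < a) (h1 : a < 1) :
    (↑a : UnitAddCircle) ≠ 0 := by
  rw [Ne, AddCircle.coe_eq_zero_iff]
  rintro ⟨n, hn⟩
  simp only [zsmul_eq_mul, mul_one] at hn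
  rcases lt_or_ge n 1 with h | h
  · have : (n:ℝ) ≤ 0 := by exact_mod_cast Int.lt_add_one_iff.mp (by exact_mod_cast h)
    linarith
  · have : (1:ℝ) ≤ (n:ℝ) := by exact_mod_cast h
    linarith

lemma gfun_eq_expZeta {a : ℝ} (h0 : 0 < a) (h1 : a < 1) {s : ℂ} (hs : 1 < s.re) :
    gfun (Complex.exp (2 * Real.pi * I * a)) s = expZeta (↑a) s := by
  set z := Complex.exp (2 * Real.pi * I * a) with hzdef
  have hz : ‖z‖ = 1 := z_norm a
  have hz1 : z ≠ 1 := z_ne_one h0 h1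
  have hs0 : 0 < s.re := lt_trans one_pos hs
  have h2 := partial_tendsto hz hz1 hs0
  -- expZeta sum
  have h3 : HasSum (fun n : ℕ => Complex.exp (2 * Real.pi * I * a * n) / (n:ℂ) ^ s)
      (expZeta (↑a) s) := hasSum_expZeta_of_one_lt_re a hs
  have h4 : HasSum (fun n : ℕ => z ^ (n+1) * ((n+1:ℕ) : ℂ) ^ (-s)) (expZeta (↑a) s) := by
    have hf0 : Complex.exp (2 * Real.pi * I * a * (0:ℕ)) / ((0:ℕ):ℂ) ^ s = 0 := by
      rw [Nat.cast_zero, zero_cpow (by intro h; rw [h] at hs; norm_num at hs)]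
      simp
    have h5' := (hasSum_nat_add_iff (g := expZeta (↑a) s)
      (f := fun n : ℕ => Complex.exp (2 * Real.pi * I * a * n) / (n:ℂ) ^ s) 1)
    rw [Finset.sum_range_one, hf0, add_zero] at h5'
    have h5 := h5'.mpr h3
    refine h5.congr_fun fun n => ?_
    rw [cpow_neg, div_eq_mul_inv]
    congr 1
    rw [hzdef, ← Complex.exp_nat_mul]
    congr 1
    push_cast
    ring
  exact tendsto_nhds_unique h2 (h4.tendsto_sum_nat)

lemma expZeta_one_eq_gfun {a : ℝ} (h0 : 0 < a) (h1 : a < 1) :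
    expZeta (↑a) 1 = gfun (Complex.exp (2 * Real.pi * I * a)) 1 := by
  set z := Complex.exp (2 * Real.pi * I * a) with hzdef
  have hz : ‖z‖ = 1 := z_norm a
  have hz1 : z ≠ 1 := z_ne_one h0 h1
  set U : Set ℂ := {s | 0 < s.re} with hU
  have hUopen : IsOpen U := isOpen_lt continuous_const Complex.continuous_re
  have hUconn : IsPreconnected U := (convex_halfSpace_re_gt 0).isPreconnected
  have hgd : DifferentiableOn ℂ (gfun z) U :=
    fun s hs => (gfun_differentiableAt hz hz1 hs).differentiableWithinAt
  have hg : AnalyticOnNhd ℂ (gfun z) U := hgd.analyticOnNhd hUopen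
  have he : AnalyticOnNhd ℂ (expZeta (↑a)) U :=
    ((differentiable_expZeta_of_ne_zero (coe_ne_zero_unitAddCircle h0 h1)).differentiableOn).analyticOnNhd hUopen
  have h2 : (2:ℂ) ∈ U := by simp [hU]
  have heq : expZeta (↑a) =ᶠ[𝓝 (2:ℂ)] gfun z := by
    have hopen : IsOpen {s : ℂ | 1 < s.re} := isOpen_lt continuous_const Complex.continuous_re
    filter_upwards [hopen.mem_nhds (by simp)] with s hs
    exact (gfun_eq_expZeta h0 h1 hs).symm
  have := he.eqOn_of_preconnected_of_eventuallyEq hg hUconn h2 heq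
  exact this (by simp [hU])

lemma gfun_one_eq {z : ℂ} (hz : ‖z‖ = 1) (hz1 : z ≠ 1) (hslit : (0:ℝ) < (1 - z).re) :
    gfun z 1 = -Complex.log (1 - z) := by
  -- partial sums of the boundary power series converge to gfun z 1
  have hpt := partial_tendsto hz hz1 (s := 1) (by norm_num)
  set f : ℕ → ℂ := fun n => z ^ n / (n : ℂ) with hf
  have hps : Tendsto (fun M : ℕ => ∑ i ∈ Finset.range M, f i) atTop (𝓝 (gfun z 1)) := by
    rw [← Filter.tendsto_add_atTop_iff_nat 1]
    have : ∀ M : ℕ, ∑ i ∈ Finset.range (M + 1), f i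
        = ∑ n ∈ Finset.range M, z ^ (n + 1) * ((n + 1 : ℕ) : ℂ) ^ (-(1:ℂ)) := by
      intro M
      rw [Finset.sum_range_succ']
      have : f 0 = 0 := by simp [hf]
      rw [this, add_zero]
      refine Finset.sum_congr rfl fun i _ => ?_
      simp only [hf, cpow_neg, cpow_one, div_eq_mul_inv]
    simpa only [this] using hpt
  -- Abel's limit theorem
  have habel := Complex.tendsto_tsum_powerSeries_nhdsWithin_stolzSet (M := 2) hps
  have hmap := (Complex.nhdsWithin_lt_le_nhdsWithin_stolzSet (M := 2) one_lt_two)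
  have hcoe : Tendsto (fun x : ℝ => (x:ℂ)) (𝓝[<] (1:ℝ)) (𝓝[Complex.stolzSet 2] 1) := hmap
  have habel' : Tendsto (fun x : ℝ => ∑' n : ℕ, f n * (x:ℂ) ^ n) (𝓝[<] (1:ℝ))
      (𝓝 (gfun z 1)) := habel.comp hcoe
  -- evaluate the power series for |x| < 1
  have heval : ∀ x : ℝ, x ∈ Set.Ioo (0:ℝ) 1 → ∑' n : ℕ, f n * (x:ℂ) ^ n
      = -Complex.log (1 - x * z) := by
    intro x hx
    have hxz : ‖(x:ℂ) * z‖ < 1 := by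
      rw [norm_mul, hz, mul_one, Complex.norm_real]
      rw [Real.norm_eq_abs, abs_of_pos hx.1]
      exact hx.2
    have := Complex.hasSum_taylorSeries_neg_log hxz
    rw [← this.tsum_eq]
    congr 1
    ext n
    rw [hf, mul_pow]
    ring
  have hlog : Tendsto (fun x : ℝ => -Complex.log (1 - x * z)) (𝓝[<] (1:ℝ))
      (𝓝 (-Complex.log (1 - z))) := by
    have hcont : ContinuousAt Complex.log (1 - z) :=
      continuousAt_clog (Or.inl hslit)
    have hinner : Tendsto (fun x : ℝ => 1 - (x:ℂ) * z) (𝓝[<] (1:ℝ)) (𝓝 (1 - z)) := by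
      have hc : Continuous (fun x : ℝ => 1 - (x:ℂ) * z) := by continuity
      have := hc.tendsto 1
      simp only [Complex.ofReal_one, one_mul] at this
      exact this.mono_left nhdsWithin_le_nhds
    exact (hcont.tendsto.comp hinner).neg
  have hEq : (fun x : ℝ => ∑' n : ℕ, f n * (x:ℂ) ^ n) =ᶠ[𝓝[<] (1:ℝ)]
      (fun x : ℝ => -Complex.log (1 - x * z)) := by
    filter_upwards [Ioo_mem_nhdsLT_of_mem (by norm_num : (1:ℝ) ∈ Set.Ioc 0 1)] with x hx
    exact heval x hx
  exact tendsto_nhds_unique (habel'.congr' hEq) hlog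

lemma expZeta_one_val {a : ℝ} (h0 : 0 < a) (h1 : a < 1) :
    expZeta (↑a) 1 = -Complex.log (1 - Complex.exp (2 * Real.pi * I * a)) := by
  rw [expZeta_one_eq_gfun h0 h1]
  exact gfun_one_eq (z_norm a) (z_ne_one h0 h1) (one_sub_z_re h0 h1)

lemma neg_coe_eq {a : ℝ} : ((1 - a : ℝ) : UnitAddCircle) = -(↑a : UnitAddCircle) := by
  have : ((1 - a : ℝ) : UnitAddCircle) + (↑a : UnitAddCircle) = 0 := by
    rw [← QuotientAddGroup.mk_add, sub_add_cancel]
    exact AddCircle.coe_period 1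
  linear_combination (norm := abel) this

lemma exp_one_sub (a : ℝ) : Complex.exp (2 * Real.pi * I * (1 - a : ℝ))
    = (starRingEnd ℂ) (Complex.exp (2 * Real.pi * I * a)) := by
  rw [← Complex.exp_conj]
  rw [show ((starRingEnd ℂ)) (2 * Real.pi * I * a) = -(2 * Real.pi * I * a) by
    simp only [map_mul, Complex.conj_I, Complex.conj_ofReal, map_ofNat]; ring]
  rw [show ((2 * Real.pi * I * ((1:ℝ) - a : ℝ)) : ℂ) = 2 * Real.pi * I + -(2 * Real.pi * I * a) by
    push_cast; ring]
  rw [Complex.exp_add, Complex.exp_two_pi_mul_I, one_mul]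

lemma abs_one_sub_exp {a : ℝ} (h0 : 0 < a) (h1 : a < 1) :
    ‖1 - Complex.exp (2 * Real.pi * I * a)‖ = 2 * Real.sin (Real.pi * a) := by
  set z := Complex.exp (2 * Real.pi * I * a) with hzdef
  have hre : z.re = Real.cos (2 * Real.pi * a) := by
    rw [hzdef, show (2 * (Real.pi:ℂ) * I * a) = ((2 * Real.pi * a : ℝ) : ℂ) * I by push_cast; ring]
    rw [Complex.exp_ofReal_mul_I_re]
  have him : z.im = Real.sin (2 * Real.pi * a) := by
    rw [hzdef, show (2 * (Real.pi:ℂ) * I * a) = ((2 * Real.pi * a : ℝ) : ℂ) * I by push_cast; ring]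
    rw [Complex.exp_ofReal_mul_I_im]
  have hsin : 0 < Real.sin (Real.pi * a) :=
    Real.sin_pos_of_pos_of_lt_pi (by positivity) (by nlinarith [Real.pi_pos])
  have hsq : (‖1 - z‖)^2 = (2 * Real.sin (Real.pi * a))^2 := by
    rw [Complex.sq_norm, Complex.normSq_apply]
    simp only [Complex.sub_re, Complex.sub_im, Complex.one_re, Complex.one_im, hre, him]
    have hc : Real.cos (2 * Real.pi * a) = 1 - 2 * Real.sin (Real.pi * a)^2 := by
      rw [show 2 * Real.pi * a = 2 * (Real.pi * a) by ring, Real.cos_two_mul']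
      nlinarith [Real.sin_sq_add_cos_sq (Real.pi * a)]
    have hs : Real.sin (2 * Real.pi * a) = 2 * Real.sin (Real.pi * a) * Real.cos (Real.pi * a) := by
      rw [show 2 * Real.pi * a = 2 * (Real.pi * a) by ring, Real.sin_two_mul]
    rw [hc, hs]
    nlinarith [Real.sin_sq_add_cos_sq (Real.pi * a)]
  have habs : 0 ≤ ‖1 - z‖ := norm_nonneg _
  nlinarith [hsq, habs, hsin]

lemma cosZeta_one_val {a : ℝ} (h0 : 0 < a) (h1 : a < 1) :
    cosZeta (↑a) 1 = -((Real.log (2 * Real.sin (Real.pi * a)) : ℝ) : ℂ) := by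
  set z := Complex.exp (2 * Real.pi * I * a) with hzdef
  have h1' := expZeta_one_val h0 h1
  have h2' : expZeta (-(↑a : UnitAddCircle)) 1 = -Complex.log (1 - (starRingEnd ℂ) z) := by
    rw [← neg_coe_eq]
    rw [expZeta_one_val (by linarith) (by linarith)]
    rw [exp_one_sub]
  rw [cosZeta_eq, h1', h2']
  have harg : (1 - z).arg ≠ Real.pi := by
    intro h
    have := Complex.arg_eq_pi_iff.mp h
    have h3 := one_sub_z_re h0 h1
    rw [← hzdef] at h3
    linarith [this.1]
  rw [show (1 - (starRingEnd ℂ) z) = (starRingEnd ℂ) (1 - z) by rw [map_sub, map_one]]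
  rw [Complex.log_conj _ harg]
  rw [show -Complex.log (1-z) + -((starRingEnd ℂ) (Complex.log (1-z)))
      = -(Complex.log (1-z) + (starRingEnd ℂ) (Complex.log (1-z))) by ring]
  rw [Complex.add_conj]
  rw [Complex.log_re, abs_one_sub_exp h0 h1]
  push_cast
  ring

lemma deriv_hurwitzZetaEven_zero (a : UnitAddCircle) (ha : a ≠ 0) :
    deriv (hurwitzZetaEven a) 0 = cosZeta a 1 / 2 := by
  set G : ℂ → ℂ := fun s => (2 * (2 * Real.pi : ℂ) ^ (-s) * Complex.Gamma s * cosZeta a s)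
    * Complex.cos (Real.pi * s / 2) with hG
  have hFeq : (fun s : ℂ => hurwitzZetaEven a (1 - s)) =ᶠ[𝓝 (1:ℂ)] G := by
    have hopen : IsOpen {s : ℂ | 0 < s.re} := isOpen_lt continuous_const Complex.continuous_re
    filter_upwards [hopen.mem_nhds (by norm_num)] with s hs
    rw [hurwitzZetaEven_one_sub a (fun n => by
        intro h
        rw [h] at hs
        simp only [Complex.neg_re, Complex.natCast_re, Set.mem_setOf_eq] at hs
        have : (0:ℝ) ≤ (n:ℝ) := Nat.cast_nonneg n
        linarith) (Or.inl ha), hG]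
    ring
  have hL : deriv (fun s : ℂ => hurwitzZetaEven a (1 - s)) 1 = -deriv (hurwitzZetaEven a) 0 := by
    have := deriv_comp_const_sub (hurwitzZetaEven a) 1 1
    simpa using this
  -- derivative of G at 1
  have hh : DifferentiableAt ℂ (fun s => 2 * (2 * Real.pi : ℂ) ^ (-s) * Complex.Gamma s
      * cosZeta a s) 1 := by
    apply DifferentiableAt.mul
    apply DifferentiableAt.mul
    · apply DifferentiableAt.const_mul
      apply DifferentiableAt.const_cpow (differentiable_neg _)
      left
      simp [Real.pi_ne_zero]
    · apply Complex.differentiableAt_Gamma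
      intro m
      intro h
      have : (1:ℝ) = -(m:ℝ) := by exact_mod_cast congrArg Complex.re h
      have : (0:ℝ) ≤ (m:ℝ) := Nat.cast_nonneg m
      linarith
    · exact differentiableAt_cosZeta a (Or.inr ha)
  have hcder : HasDerivAt (fun s : ℂ => Complex.cos (Real.pi * s / 2))
      (-(Real.pi / 2 : ℂ)) 1 := by
    have hinner : HasDerivAt (fun s : ℂ => (Real.pi : ℂ) * s / 2) ((Real.pi : ℂ) / 2) 1 := by
      simpa using ((hasDerivAt_id (1:ℂ)).const_mul (Real.pi : ℂ)).div_const 2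
    have := (Complex.hasDerivAt_cos ((Real.pi : ℂ) * 1 / 2)).comp 1 hinner
    have hval : (Real.pi : ℂ) * 1 / 2 = (Real.pi : ℂ) / 2 := by ring
    rw [hval, Complex.sin_pi_div_two] at this
    rw [show -(Real.pi / 2 : ℂ) = -1 * (Real.pi / 2) by ring]
    exact this
  have hGder : deriv G 1 = -(cosZeta a 1) / 2 := by
    rw [hG]
    rw [deriv_fun_mul hh hcder.differentiableAt]
    rw [hcder.deriv]
    have hc1 : Complex.cos ((Real.pi:ℂ) * 1 / 2) = 0 := by
      rw [show (Real.pi:ℂ) * 1 / 2 = (Real.pi:ℂ) / 2 by ring, Complex.cos_pi_div_two]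
    rw [hc1, mul_zero, zero_add]
    have hval : 2 * (2 * (Real.pi:ℂ)) ^ (-(1:ℂ)) * Complex.Gamma 1 * cosZeta a 1
        = cosZeta a 1 / (Real.pi:ℂ) := by
      rw [Complex.Gamma_one, cpow_neg, cpow_one]
      have hpi : (Real.pi : ℂ) ≠ 0 := Complex.ofReal_ne_zero.mpr Real.pi_ne_zero
      field_simp
    rw [hval]
    have hpi : (Real.pi : ℂ) ≠ 0 := Complex.ofReal_ne_zero.mpr Real.pi_ne_zero
    field_simp
  have := hFeq.deriv_eq
  rw [hL, hGder] at this
  have h2 : deriv (hurwitzZetaEven a) 0 = cosZeta a 1 / 2 := by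
    have := neg_eq_iff_eq_neg.mp this
    rw [this]; ring
  exact h2

/-- Hurwitz zeta function `ζ(s, α)` for real `α > 0`, via Mathlib's `hurwitzZeta` on the
unit circle: writing `α = β + m` with `β ∈ (0,1]` and `m = ⌈α⌉ - 1 ≥ 0`, we have
`ζ(s, α) = ζ(s, β) - ∑_{k<m} (β + k)^{-s}`. -/
noncomputable def hzeta (s : ℂ) (α : ℝ) : ℂ :=
  hurwitzZeta (↑(α - (⌈α⌉ - 1 : ℤ)) : UnitAddCircle) s -
    ∑ k ∈ Finset.range (⌈α⌉ - 1).toNat, ((α - (⌈α⌉ - 1 : ℤ) + k : ℝ) : ℂ) ^ (-s)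

lemma hzeta_eq {β : ℝ} (h0 : 0 < β) (h1 : β ≤ 1) :
    (fun s : ℂ => hzeta s β) = fun s => hurwitzZeta (↑β : UnitAddCircle) s := by
  have hc : ⌈β⌉ = 1 := by
    rw [Int.ceil_eq_iff]
    constructor
    · push_cast; linarith
    · push_cast; linarith
  funext s
  rw [hzeta, hc]
  norm_num

theorem hzeta_deriv_zero_add (α : ℝ) (h0 : 0 < α) (h1 : α < 1) :
    deriv (fun s : ℂ => hzeta s α) 0 + deriv (fun s : ℂ => hzeta s (1 - α)) 0 =
      -(Real.log (2 * Real.sin (Real.pi * α)) : ℂ) := by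
  rw [hzeta_eq h0 h1.le, hzeta_eq (by linarith) (by linarith)]
  rw [show ((1 - α : ℝ) : UnitAddCircle) = -(↑α : UnitAddCircle) from neg_coe_eq]
  have ha : (↑α : UnitAddCircle) ≠ 0 := coe_ne_zero_unitAddCircle h0 h1
  have hd1 : DifferentiableAt ℂ (hurwitzZeta (↑α : UnitAddCircle)) 0 :=
    differentiableAt_hurwitzZeta _ (by norm_num)
  have hd2 : DifferentiableAt ℂ (hurwitzZeta (-(↑α : UnitAddCircle))) 0 :=
    differentiableAt_hurwitzZeta _ (by norm_num)
  have hsum : deriv (fun s => hurwitzZeta (↑α : UnitAddCircle) s) 0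
      + deriv (fun s => hurwitzZeta (-(↑α : UnitAddCircle)) s) 0
      = deriv (fun s => hurwitzZeta (↑α : UnitAddCircle) s
          + hurwitzZeta (-(↑α : UnitAddCircle)) s) 0 := by
    rw [deriv_fun_add hd1 hd2]
  rw [hsum]
  have heq : (fun s => hurwitzZeta (↑α : UnitAddCircle) s
      + hurwitzZeta (-(↑α : UnitAddCircle)) s)
      = fun s => 2 * hurwitzZetaEven (↑α : UnitAddCircle) s := by
    funext s
    rw [hurwitzZetaEven_eq]
    ring
  rw [heq, deriv_const_mul_field, deriv_hurwitzZetaEven_zero _ ha, cosZeta_one_val h0 h1]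
  ring
end

section
/- For every real α with 0 < α < 1 and every complex s with Re s < 0, ζ(s, α) = 2·(2π)^{s-1}·Γ(1-s)·Σ_{n≥1} sin(πs/2 + 2πnα)·n^{s-1} (the Hurwitz formula / functional equation for the Hurwitz zeta function). -/
open Complex HurwitzZeta

lemma exp_pi_div_two_mul_I' : Complex.exp ((Real.pi : ℂ) / 2 * I) = I := by
  rw [Complex.exp_mul_I]
  rw [show ((Real.pi : ℂ) / 2) = ((Real.pi / 2 : ℝ) : ℂ) by push_cast; ring]
  rw [← Complex.ofReal_cos, ← Complex.ofReal_sin, Real.cos_pi_div_two, Real.sin_pi_div_two]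
  simp

lemma key_sin (θ : ℂ) :
    Complex.exp (θ * I - (Real.pi : ℂ) / 2 * I) + Complex.exp (-(θ * I - (Real.pi : ℂ) / 2 * I))
      = 2 * Complex.sin θ := by
  rw [Complex.sin, neg_sub, Complex.exp_sub, Complex.exp_sub, exp_pi_div_two_mul_I',
    neg_mul, Complex.exp_neg]
  have hE : Complex.exp (θ * I) ≠ 0 := Complex.exp_ne_zero _
  field_simp
  ring_nf
  rw [Complex.I_sq]; ring

theorem hurwitz_formula (α : ℝ) (h0 : 0 < α) (h1 : α < 1) (s : ℂ) (hs : s.re < 0) :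
    ∃ S : ℂ,
      HasSum
        (fun n : ℕ =>
          Complex.sin ((Real.pi : ℂ) * s / 2 + 2 * (Real.pi : ℂ) * (n + 1) * α) *
            ((n : ℂ) + 1) ^ (s - 1)) S ∧
      hzeta s α = 2 * (2 * (Real.pi : ℂ)) ^ (s - 1) * Complex.Gamma (1 - s) * S := by
  set w : ℂ := 1 - s with hw_def
  have hw : 1 < w.re := by simp [hw_def, Complex.sub_re]; linarith
  have hw0 : w ≠ 0 := by intro h; rw [h] at hw; norm_num at hw
  set c1 : ℂ := Complex.exp (-(Real.pi : ℂ) * I * w / 2)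
  set c2 : ℂ := Complex.exp ((Real.pi : ℂ) * I * w / 2)
  set S : ℂ := (c1 * expZeta (↑α : UnitAddCircle) w + c2 * expZeta (-(↑α : ℝ) : UnitAddCircle) w) / 2
    with hS_def
  -- the basic has-sum from Mathlib
  have H1 := hasSum_expZeta_of_one_lt_re α hw
  have H2 := hasSum_expZeta_of_one_lt_re (-α) hw
  rw [show ((-α : ℝ) : UnitAddCircle) = -((α : ℝ) : UnitAddCircle) from AddCircle.coe_neg _] at H2
  have H : HasSum
      (fun n : ℕ => (c1 * (Complex.exp (2 * (Real.pi : ℂ) * I * α * n) / (n : ℂ) ^ w)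
        + c2 * (Complex.exp (2 * (Real.pi : ℂ) * I * (-α : ℝ) * n) / (n : ℂ) ^ w)) / 2) S :=
    ((H1.mul_left c1).add (H2.mul_left c2)).div_const 2
  -- drop the (zero) term at n = 0
  have Hshift := (hasSum_nat_add_iff' (f := fun n : ℕ => (c1 * (Complex.exp (2 * (Real.pi : ℂ) * I * α * n) / (n : ℂ) ^ w)
        + c2 * (Complex.exp (2 * (Real.pi : ℂ) * I * (-α : ℝ) * n) / (n : ℂ) ^ w)) / 2) 1).2 H
  simp only [Finset.range_one, Finset.sum_singleton, Nat.cast_zero,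
    Complex.zero_cpow hw0, div_zero, mul_zero, add_zero, zero_add, zero_div, sub_zero] at Hshift
  -- identify the shifted terms with the target terms
  have Hterm : ∀ n : ℕ,
      (c1 * (Complex.exp (2 * (Real.pi : ℂ) * I * α * (↑(n + 1) : ℂ)) / ((↑(n + 1) : ℂ)) ^ w)
        + c2 * (Complex.exp (2 * (Real.pi : ℂ) * I * (-α : ℝ) * (↑(n + 1) : ℂ)) / ((↑(n + 1) : ℂ)) ^ w)) / 2
      = Complex.sin ((Real.pi : ℂ) * s / 2 + 2 * (Real.pi : ℂ) * (n + 1) * α) *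
            ((n : ℂ) + 1) ^ (s - 1) := by
    intro n
    set N : ℂ := (n : ℂ) + 1 with hN
    have hNc : ((↑(n + 1) : ℕ) : ℂ) = N := by push_cast [hN]; ring
    set θ : ℂ := (Real.pi : ℂ) * s / 2 + 2 * (Real.pi : ℂ) * N * α with hθ
    have hN0 : N ≠ 0 := by
      rw [hN, show ((n : ℂ) + 1) = ((n + 1 : ℕ) : ℂ) by push_cast; ring]
      exact_mod_cast n.succ_ne_zero
    have hNpow : N ^ (s - 1) = (N ^ w)⁻¹ := by
      rw [show s - 1 = -w by rw [hw_def]; ring, Complex.cpow_neg]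
    have e1 : c1 * Complex.exp (2 * (Real.pi : ℂ) * I * α * N) = Complex.exp (θ * I - (Real.pi : ℂ) / 2 * I) := by
      rw [← Complex.exp_add]
      congr 1
      rw [hθ, hw_def]
      ring
    have e2 : c2 * Complex.exp (2 * (Real.pi : ℂ) * I * (-α : ℝ) * N)
        = Complex.exp (-(θ * I - (Real.pi : ℂ) / 2 * I)) := by
      rw [← Complex.exp_add]
      congr 1
      rw [hθ, hw_def]
      push_cast
      ring
    have hNw : N ^ w ≠ 0 := by
      rw [Complex.cpow_def_of_ne_zero hN0]; exact Complex.exp_ne_zero _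
    rw [hNc, hNpow, ← mul_div_assoc, ← mul_div_assoc, ← add_div, e1, e2, key_sin θ]
    field_simp
  refine ⟨S, ?_, ?_⟩
  · exact Hshift.congr_fun fun n => (Hterm n).symm
  · -- evaluate hzeta and apply the functional equation
    have hceil : ⌈α⌉ = 1 := by
      rw [Int.ceil_eq_iff]
      simp only [Int.cast_one]
      exact ⟨by linarith, by linarith⟩
    have hz : hzeta s α = hurwitzZeta ((α : ℝ) : UnitAddCircle) s := by
      rw [hzeta, hceil]
      norm_num
    have hsne : ∀ n : ℕ, w ≠ -(n : ℂ) := by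
      intro n h
      have : w.re = -(n : ℝ) := by rw [h]; simp
      rw [this] at hw
      have : (0 : ℝ) ≤ n := Nat.cast_nonneg n
      linarith
    have hfe := hurwitzZeta_one_sub ((α : ℝ) : UnitAddCircle) hsne
      (Or.inr (by intro h; rw [h] at hw; simp at hw))
    rw [show (1 : ℂ) - w = s by rw [hw_def]; ring] at hfe
    rw [hz, hfe, hS_def]
    rw [show (2 * (Real.pi : ℂ)) ^ (s - 1) = (2 * (Real.pi : ℂ)) ^ (-w) by
      rw [hw_def]; ring_nf]
    ring
end
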